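/- arXiv:1010.1834 — 2 statements merged into one kernel-verified Lean document; each statement's English description precedes it below -/
import Mathlib

section
/- The intersection of K spheres in R^K whose centers are K affinely independent points consists of at most two points. -/
open Set Module

theorem sphere_intersection_at_most_two (K : ℕ) (hK : 1 ≤ K)
    (x : Fin K → EuclideanSpace ℝ (Fin K)) (hx : AffineIndependent ℝ x)
    (d : Fin K → ℝ) (hd : ∀ i, 0 < d i) :
    {z : EuclideanSpace ℝ (Fin K) | ∀ i, dist z (x i) = d i}.encard ≤ 2 := by
  set S := {z : EuclideanSpace ℝ (Fin K) | ∀ i, dist z (x i) = d i} with hS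
  set W : Submodule ℝ (EuclideanSpace ℝ (Fin K)) := vectorSpan ℝ (Set.range x) with hW
  -- finrank of W is K - 1
  have hWrank : finrank ℝ W = K - 1 := by
    apply hx.finrank_vectorSpan
    simp [Nat.sub_add_cancel hK]
  have hWperp : finrank ℝ Wᗮ = 1 := by
    have h := W.finrank_add_finrank_orthogonal
    rw [hWrank, finrank_euclideanSpace_fin] at h
    omega
  -- constant inner product for differences of points in S
  have hconst : ∀ z ∈ S, ∀ w ∈ S, ∀ i : Fin K,
      inner (𝕜 := ℝ) (w - z) (x i) = (‖w‖ ^ 2 - ‖z‖ ^ 2) / 2 := by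
    intro z hz w hw i
    have h1 : ‖z - x i‖ ^ 2 = ‖w - x i‖ ^ 2 := by
      rw [← dist_eq_norm, ← dist_eq_norm, hz i, hw i]
    rw [norm_sub_sq_real, norm_sub_sq_real] at h1
    rw [inner_sub_left]
    linarith
  -- differences lie in Wᗮ
  have hmem : ∀ z ∈ S, ∀ w ∈ S, w - z ∈ Wᗮ := by
    intro z hz w hw
    rw [Submodule.mem_orthogonal]
    intro u hu
    rw [hW, vectorSpan_def] at hu
    rw [real_inner_comm]
    induction hu using Submodule.span_induction with
    | mem v hv =>
      obtain ⟨p, ⟨i, rfl⟩, q, ⟨j, rfl⟩, rfl⟩ := hv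
      have := hconst z hz w hw i
      have := hconst z hz w hw j
      simp only [vsub_eq_sub]
      rw [inner_sub_right]
      linarith
    | zero => simp
    | add v₁ v₂ _ _ h₁ h₂ => rw [inner_add_right, h₁, h₂, add_zero]
    | smul c v _ h => rw [real_inner_smul_right, h, mul_zero]
  -- key: any three points of S cannot be pairwise distinct
  have key : ∀ a ∈ S, ∀ b ∈ S, ∀ c ∈ S, a ≠ b → c = a ∨ c = b := by
    intro a ha b hb c hc hab
    set u := b - a with hu
    have hune : u ≠ 0 := sub_ne_zero.mpr (Ne.symm hab)
    have huW : u ∈ Wᗮ := hmem a ha b hb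
    have hvW : c - a ∈ Wᗮ := hmem a ha c hc
    -- span of u equals Wᗮ
    have hspan : Submodule.span ℝ {u} = Wᗮ := by
      apply Submodule.eq_of_le_of_finrank_le
      · rw [Submodule.span_le, Set.singleton_subset_iff]; exact huW
      · rw [hWperp, finrank_span_singleton hune]
    obtain ⟨t, ht⟩ := Submodule.mem_span_singleton.mp (hspan ▸ hvW)
    -- the index 0
    set i0 : Fin K := ⟨0, hK⟩
    have hN : (0:ℝ) < ‖u‖ ^ 2 := by
      have := norm_pos_iff.mpr hune
      positivity
    set B : ℝ := inner (𝕜 := ℝ) (a - x i0) u with hB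
    have eb : 2 * B + ‖u‖ ^ 2 = 0 := by
      have h1 : ‖(a - x i0) + u‖ ^ 2 = ‖a - x i0‖ ^ 2 := by
        have : a - x i0 + u = b - x i0 := by rw [hu]; abel
        rw [this, ← dist_eq_norm, ← dist_eq_norm, ha i0, hb i0]
      rw [norm_add_sq_real] at h1
      linarith
    have ec : 2 * t * B + t ^ 2 * ‖u‖ ^ 2 = 0 := by
      have h1 : ‖(a - x i0) + t • u‖ ^ 2 = ‖a - x i0‖ ^ 2 := by
        have : a - x i0 + t • u = c - x i0 := by rw [ht]; abel
        rw [this, ← dist_eq_norm, ← dist_eq_norm, ha i0, hc i0]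
      rw [norm_add_sq_real, real_inner_smul_right, norm_smul] at h1
      have h3 : (‖t‖ * ‖u‖) ^ 2 = t ^ 2 * ‖u‖ ^ 2 := by
        rw [mul_pow, Real.norm_eq_abs, sq_abs]
      linarith [h1, h3, hB]
    have hts : t * (t - 1) * ‖u‖ ^ 2 = 0 := by linear_combination ec - t * eb
    have : t = 0 ∨ t = 1 := by
      rcases mul_eq_zero.mp hts with h | h
      · rcases mul_eq_zero.mp h with h | h
        · exact Or.inl h
        · exact Or.inr (by linarith)
      · exact absurd h (ne_of_gt hN)
    rcases this with rfl | rfl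
    · left; have : c - a = 0 := by rw [← ht]; simp
      exact sub_eq_zero.mp this
    · right
      have : c - a = b - a := by rw [← ht, one_smul, hu]
      have := sub_left_injective this
      exact this
  -- conclude
  rcases Set.eq_empty_or_nonempty S with h | ⟨a, ha⟩
  · rw [h]; simp
  by_cases hsub : S ⊆ {a}
  · calc S.encard ≤ ({a} : Set _).encard := Set.encard_mono hsub
      _ = 1 := Set.encard_singleton a
      _ ≤ 2 := by norm_num
  · obtain ⟨b, hb, hba⟩ := Set.not_subset.mp hsub
    simp only [Set.mem_singleton_iff] at hba
    have hsub2 : S ⊆ {a, b} := by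
      intro c hc
      rcases key a ha b hb c hc (Ne.symm hba) with h | h
      · exact Or.inl h
      · exact Or.inr h
    calc S.encard ≤ ({a, b} : Set _).encard := Set.encard_mono hsub2
      _ ≤ 2 := by
        rw [Set.encard_pair (Ne.symm hba)]
end

section
/- For the graph on vertices {1,...,K+3} with edges {i,j} for 0 < i−j ≤ K together with edge {1, K+3}, all edge weights equal to 1, in the case K = 2 (so n = 5): the number of embeddings into R² extending a fixed valid embedding of the first two vertices and satisfying all unit-distance constraints is exactly 6, which is not a power of two. -/
set_option maxHeartbeats 2000000

noncomputable def pt (a b : ℝ) : EuclideanSpace ℝ (Fin 2) := !₂[a, b]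

noncomputable def sol (b c d e f : ℝ) : Fin 5 → EuclideanSpace ℝ (Fin 2) :=
  ![pt 0 0, pt 1 0, pt (1/2) b, pt c d, pt e f]

lemma dist_eq_one_iff (u v : EuclideanSpace ℝ (Fin 2)) :
    dist u v = 1 ↔ (u 0 - v 0)^2 + (u 1 - v 1)^2 = 1 := by
  rw [EuclideanSpace.dist_eq, Fin.sum_univ_two, Real.sqrt_eq_one]
  simp [Real.dist_eq, sq_abs]

lemma pt_zero : pt 0 0 = 0 := by
  ext j; fin_cases j <;> simp [pt]

lemma pt_single : pt 1 0 = EuclideanSpace.single 0 1 := by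
  ext j; fin_cases j <;> simp [pt, EuclideanSpace.single_apply]

lemma eq_sol (x : Fin 5 → EuclideanSpace ℝ (Fin 2)) (b c d e f : ℝ)
    (h0 : x 0 = 0) (h1 : x 1 = EuclideanSpace.single 0 1)
    (h20 : x 2 0 = 1/2) (h21 : x 2 1 = b) (h30 : x 3 0 = c) (h31 : x 3 1 = d)
    (h40 : x 4 0 = e) (h41 : x 4 1 = f) : x = sol b c d e f := by
  funext i
  fin_cases i
  · exact h0.trans pt_zero.symm
  · exact h1.trans pt_single.symm
  · ext jj; fin_cases jj
    · exact h20
    · exact h21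
  · ext jj; fin_cases jj
    · exact h30
    · exact h31
  · ext jj; fin_cases jj
    · exact h40
    · exact h41

lemma forward (x : Fin 5 → EuclideanSpace ℝ (Fin 2))
    (h0 : x 0 = 0) (h1 : x 1 = EuclideanSpace.single 0 1)
    (hd : ∀ i j : Fin 5,
      (i.val < j.val ∧ j.val - i.val ≤ 2) ∨ (i = 0 ∧ j = 4) →
      dist (x i) (x j) = 1) :
    x = sol (Real.sqrt 3 / 2) (3/2) (Real.sqrt 3 / 2) 1 0 ∨
    x = sol (Real.sqrt 3 / 2) 0 0 1 0 ∨
    x = sol (Real.sqrt 3 / 2) 0 0 (-(1/2)) (Real.sqrt 3 / 2) ∨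
    x = sol (-(Real.sqrt 3 / 2)) (3/2) (-(Real.sqrt 3 / 2)) 1 0 ∨
    x = sol (-(Real.sqrt 3 / 2)) 0 0 1 0 ∨
    x = sol (-(Real.sqrt 3 / 2)) 0 0 (-(1/2)) (-(Real.sqrt 3 / 2)) := by
  have h00 : x 0 0 = 0 := by rw [h0]; rfl
  have h01 : x 0 1 = 0 := by rw [h0]; rfl
  have h10 : x 1 0 = 1 := by rw [h1]; simp [EuclideanSpace.single_apply]
  have h11 : x 1 1 = 0 := by rw [h1]; simp [EuclideanSpace.single_apply]
  have d02 := (dist_eq_one_iff _ _).mp (hd 0 2 (Or.inl (by decide)))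
  have d12 := (dist_eq_one_iff _ _).mp (hd 1 2 (Or.inl (by decide)))
  have d13 := (dist_eq_one_iff _ _).mp (hd 1 3 (Or.inl (by decide)))
  have d23 := (dist_eq_one_iff _ _).mp (hd 2 3 (Or.inl (by decide)))
  have d04 := (dist_eq_one_iff _ _).mp (hd 0 4 (Or.inr (by decide)))
  have d24 := (dist_eq_one_iff _ _).mp (hd 2 4 (Or.inl (by decide)))
  have d34 := (dist_eq_one_iff _ _).mp (hd 3 4 (Or.inl (by decide)))
  rw [h00, h01] at d02 d04
  rw [h10, h11] at d12 d13
  set A := x 2 0 with hA'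
  set B := x 2 1 with hB'
  set C := x 3 0 with hC'
  set D := x 3 1 with hD'
  set E := x 4 0 with hE'
  set F := x 4 1 with hF'
  have hs3 : Real.sqrt 3 ^ 2 = 3 := Real.sq_sqrt (by norm_num)
  have hs3p : (0:ℝ) < Real.sqrt 3 := Real.sqrt_pos.mpr (by norm_num)
  have hA : A = 1/2 := by linear_combination (d02 - d12) / 2
  have hB2 : B ^ 2 = 3/4 := by linear_combination d02 - (A + 1/2) * hA
  have hBne : B ≠ 0 := by intro h; rw [h] at hB2; norm_num at hB2
  have hB : B = Real.sqrt 3 / 2 ∨ B = -(Real.sqrt 3 / 2) := by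
    have h : (B - Real.sqrt 3 / 2) * (B + Real.sqrt 3 / 2) = 0 := by linear_combination hB2 - (1/4) * hs3
    rcases mul_eq_zero.mp h with h | h
    · left; linarith
    · right; linarith
  have hC : C = 2 * B * D := by linear_combination d23 - d13 + (2*C - A - 1/2) * hA - hB2
  have hDD : D * (D - B) = 0 := by linear_combination (1/4) * d13 + (-(1/4)*(C + 2*B*D) + 1/2) * hC - D^2 * hB2
  have hEF : E + 2 * B * F = 1 := by linear_combination d04 - d24 + (A + 1/2 - 2*E) * hA + hB2
  rcases mul_eq_zero.mp hDD with hD | hD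
  · -- D = 0, C = 0
    have hC0 : C = 0 := by rw [hC, hD]; ring
    have hFF : F * (F - B) = 0 := by linear_combination (1/4)*d04 + (1/4)*(2*B*F - E - 1) * hEF - F^2 * hB2
    rcases mul_eq_zero.mp hFF with hF | hF
    · -- F = 0, E = 1
      have hE1 : E = 1 := by rw [hF] at hEF; linarith
      rcases hB with hB | hB
      · exact Or.inr (Or.inl (eq_sol x _ _ _ _ _ h0 h1 (hA' ▸ hA) (hB' ▸ hB)
          (hC' ▸ hC0) (hD' ▸ hD) (hE' ▸ hE1) (hF' ▸ hF)))
      · exact Or.inr (Or.inr (Or.inr (Or.inr (Or.inl (eq_sol x _ _ _ _ _ h0 h1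
          (hA' ▸ hA) (hB' ▸ hB) (hC' ▸ hC0) (hD' ▸ hD) (hE' ▸ hE1) (hF' ▸ hF))))))
    · -- F = B, E = -1/2
      have hFB : F = B := by linarith
      have hE1 : E = -(1/2) := by linear_combination hEF - 2*B*hFB - 2*hB2
      rcases hB with hB | hB
      · exact Or.inr (Or.inr (Or.inl (eq_sol x _ _ _ _ _ h0 h1 (hA' ▸ hA) (hB' ▸ hB)
          (hC' ▸ hC0) (hD' ▸ hD) (hE' ▸ hE1) (hF' ▸ (hFB.trans hB)))))
      · exact Or.inr (Or.inr (Or.inr (Or.inr (Or.inr (eq_sol x _ _ _ _ _ h0 h1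
          (hA' ▸ hA) (hB' ▸ hB) (hC' ▸ hC0) (hD' ▸ hD) (hE' ▸ hE1)
          (hF' ▸ (hFB.trans hB)))))))
  · -- D = B, C = 3/2
    have hDB : D = B := by linarith
    have hC0 : C = 3/2 := by linear_combination hC + 2*B*hDB + 2*hB2
    have h3e : 3 * E + 2 * B * F = 3 := by linear_combination d04 - d34 - (2*E - C - 3/2) * hC0 - (2*F - D - B) * hDB + hB2
    have hE1 : E = 1 := by linarith
    have hF0 : F = 0 := by
      have : B * F = 0 := by linarith
      rcases mul_eq_zero.mp this with h | h
      · exact absurd h hBne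
      · exact h
    rcases hB with hB | hB
    · exact Or.inl (eq_sol x _ _ _ _ _ h0 h1 (hA' ▸ hA) (hB' ▸ hB)
        (hC' ▸ hC0) (hD' ▸ (hDB.trans hB)) (hE' ▸ hE1) (hF' ▸ hF0))
    · exact Or.inr (Or.inr (Or.inr (Or.inl (eq_sol x _ _ _ _ _ h0 h1 (hA' ▸ hA)
        (hB' ▸ hB) (hC' ▸ hC0) (hD' ▸ (hDB.trans hB)) (hE' ▸ hE1) (hF' ▸ hF0)))))
lemma sol_mem (b c d e f : ℝ) (hb : b^2 = 3/4)
    (h13 : (1-c)^2 + d^2 = 1) (h23 : (1/2-c)^2 + (b-d)^2 = 1)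
    (h04 : e^2 + f^2 = 1) (h24 : (1/2-e)^2 + (b-f)^2 = 1)
    (h34 : (c-e)^2 + (d-f)^2 = 1) :
    sol b c d e f ∈ {x : Fin 5 → EuclideanSpace ℝ (Fin 2) |
        x 0 = 0 ∧ x 1 = EuclideanSpace.single 0 1 ∧
        (∀ i j : Fin 5,
          (i.val < j.val ∧ j.val - i.val ≤ 2) ∨ (i = 0 ∧ j = 4) →
          dist (x i) (x j) = 1)} := by
  refine ⟨by simp [sol, pt_zero], by simp [sol, pt_single], ?_⟩
  intro i j hij
  fin_cases i <;> fin_cases j <;>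
    first
      | exact absurd hij (by decide)
      | (rw [dist_eq_one_iff]
         simp only [sol, pt]
         norm_num
         try nlinarith [hb, h13, h23, h04, h24, h34])

lemma sol_inj {b c d e f b' c' d' e' f' : ℝ}
    (h : sol b c d e f = sol b' c' d' e' f') :
    b = b' ∧ c = c' ∧ d = d' ∧ e = e' ∧ f = f' :=
  ⟨by simpa [sol, pt] using congrArg (fun x => x 2 1) h,
   by simpa [sol, pt] using congrArg (fun x => x 3 0) h,
   by simpa [sol, pt] using congrArg (fun x => x 3 1) h,
   by simpa [sol, pt] using congrArg (fun x => x 4 0) h,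
   by simpa [sol, pt] using congrArg (fun x => x 4 1) h⟩

theorem counterexample_six_solutions :
    {x : Fin 5 → EuclideanSpace ℝ (Fin 2) |
        x 0 = 0 ∧ x 1 = EuclideanSpace.single 0 1 ∧
        (∀ i j : Fin 5,
          (i.val < j.val ∧ j.val - i.val ≤ 2) ∨ (i = 0 ∧ j = 4) →
          dist (x i) (x j) = 1)}.encard = 6 := by
  have hs3 : Real.sqrt 3 ^ 2 = 3 := Real.sq_sqrt (by norm_num)
  have hs3p : (0:ℝ) < Real.sqrt 3 := Real.sqrt_pos.mpr (by norm_num)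
  have hset : {x : Fin 5 → EuclideanSpace ℝ (Fin 2) |
        x 0 = 0 ∧ x 1 = EuclideanSpace.single 0 1 ∧
        (∀ i j : Fin 5,
          (i.val < j.val ∧ j.val - i.val ≤ 2) ∨ (i = 0 ∧ j = 4) →
          dist (x i) (x j) = 1)} =
      {sol (Real.sqrt 3 / 2) (3/2) (Real.sqrt 3 / 2) 1 0,
       sol (Real.sqrt 3 / 2) 0 0 1 0,
       sol (Real.sqrt 3 / 2) 0 0 (-(1/2)) (Real.sqrt 3 / 2),
       sol (-(Real.sqrt 3 / 2)) (3/2) (-(Real.sqrt 3 / 2)) 1 0,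
       sol (-(Real.sqrt 3 / 2)) 0 0 1 0,
       sol (-(Real.sqrt 3 / 2)) 0 0 (-(1/2)) (-(Real.sqrt 3 / 2))} := by
    ext x
    simp only [Set.mem_setOf_eq, Set.mem_insert_iff, Set.mem_singleton_iff]
    constructor
    · rintro ⟨h0, h1, hd⟩
      exact forward x h0 h1 hd
    · rintro (rfl | rfl | rfl | rfl | rfl | rfl) <;>
        (apply sol_mem <;> nlinarith [hs3])
  rw [hset]
  rw [Set.encard_insert_of_notMem, Set.encard_insert_of_notMem,
    Set.encard_insert_of_notMem, Set.encard_insert_of_notMem, Set.encard_pair]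
  · rfl
  all_goals
    first
    | (intro hEq
       obtain ⟨e1, e2, e3, e4, e5⟩ := sol_inj hEq
       nlinarith [hs3p, e1, e2, e3, e4, e5])
    | (simp only [Set.mem_insert_iff, Set.mem_singleton_iff, not_or]
       and_intros <;>
         · intro hEq
           obtain ⟨e1, e2, e3, e4, e5⟩ := sol_inj hEq
           nlinarith [hs3p, e1, e2, e3, e4, e5])
end
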